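/- Let n ≥ 1 and let C : ℝ → Matrix (Fin n) ℝ take symmetric values and be differentiable at t₀ with derivative Ċ(t₀). Set λ(t) := inf{ v·C(t)v : v ∈ ℝⁿ, ‖v‖ = 1 } (the smallest eigenvalue of C(t)), let E be the eigenspace of C(t₀) for the eigenvalue λ(t₀), and set τ := min{ e·Ċ(t₀)e : e ∈ E, ‖e‖ = 1 }. Then liminf_{h→0⁺} (λ(t₀+h) − λ(t₀))/h ≥ τ. -/

import Mathlib

open Matrix Filter Topology

/-- The Euclidean norm of a vector in `ℝⁿ`. -/
noncomputable def euclNorm {n : ℕ} (v : Fin n → ℝ) : ℝ := Real.sqrt (∑ i, v i ^ 2)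

lemma euclNorm_eq {n : ℕ} (x : EuclideanSpace ℝ (Fin n)) :
    ‖x‖ = euclNorm (WithLp.equiv 2 (Fin n → ℝ) x) := by
  rw [EuclideanSpace.norm_eq, euclNorm]
  congr 1
  refine Finset.sum_congr rfl fun i _ => ?_
  rw [Real.norm_eq_abs, sq_abs]
  rfl

lemma quad_continuous (n : ℕ) :
    Continuous fun p : Matrix (Fin n) (Fin n) ℝ × (Fin n → ℝ) => p.2 ⬝ᵥ p.1.mulVec p.2 := by
  simp only [dotProduct, Matrix.mulVec]
  refine continuous_finset_sum _ fun i _ => ?_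
  refine Continuous.mul ((continuous_apply i).comp continuous_snd) ?_
  refine continuous_finset_sum _ fun j _ => ?_
  exact Continuous.mul
    (((continuous_apply j).comp ((continuous_apply i).comp continuous_fst)))
    ((continuous_apply j).comp continuous_snd)

lemma sphere_compact (n : ℕ) : IsCompact {v : Fin n → ℝ | euclNorm v = 1} := by
  have h : {v : Fin n → ℝ | euclNorm v = 1} =
      (WithLp.equiv 2 (Fin n → ℝ)) '' (Metric.sphere (0 : EuclideanSpace ℝ (Fin n)) 1) := by
    ext v
    constructor
    · intro hv
      refine ⟨(WithLp.equiv 2 (Fin n → ℝ)).symm v, ?_, by simp⟩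
      simp only [Metric.mem_sphere, dist_zero_right]
      rw [euclNorm_eq]; simpa using hv
    · rintro ⟨x, hx, rfl⟩
      simp only [Metric.mem_sphere, dist_zero_right] at hx
      show euclNorm (WithLp.equiv 2 (Fin n → ℝ) x) = 1
      rw [← euclNorm_eq]; exact hx
  rw [h]
  exact (isCompact_sphere _ _).image (PiLp.continuous_ofLp _ _)

lemma sphere_nonempty (n : ℕ) (hn : 1 ≤ n) :
    {v : Fin n → ℝ | euclNorm v = 1}.Nonempty := by
  refine ⟨fun j => if j = ⟨0, hn⟩ then 1 else 0, ?_⟩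
  simp [euclNorm, apply_ite (· ^ (2:ℕ))]

lemma exists_min (n : ℕ) (hn : 1 ≤ n) (M : Matrix (Fin n) (Fin n) ℝ) :
    ∃ v : Fin n → ℝ, euclNorm v = 1 ∧
      IsLeast {x | ∃ v : Fin n → ℝ, euclNorm v = 1 ∧ x = v ⬝ᵥ M.mulVec v} (v ⬝ᵥ M.mulVec v) := by
  have hc : ContinuousOn (fun v : Fin n → ℝ => v ⬝ᵥ M.mulVec v)
      {v : Fin n → ℝ | euclNorm v = 1} :=
    ((quad_continuous n).comp (by fun_prop : Continuous fun v : Fin n → ℝ => (M, v))).continuousOn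
  obtain ⟨v, hv, hmin⟩ := (sphere_compact n).exists_isMinOn (sphere_nonempty n hn) hc
  refine ⟨v, hv, ⟨v, hv, rfl⟩, ?_⟩
  rintro x ⟨w, hw, rfl⟩
  exact hmin hw

lemma rayleigh_min {n : ℕ} (M : Matrix (Fin n) (Fin n) ℝ) (hM : M.IsSymm)
    (e : Fin n → ℝ) (he : euclNorm e = 1)
    (hmin : ∀ w, euclNorm w = 1 → e ⬝ᵥ M.mulVec e ≤ w ⬝ᵥ M.mulVec w) :
    M.mulVec e = (e ⬝ᵥ M.mulVec e) • e := by
  set E := EuclideanSpace ℝ (Fin n)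
  set x₀ : E := (WithLp.equiv 2 (Fin n → ℝ)).symm e with hx₀def
  have hx0norm : ‖x₀‖ = 1 := by rw [euclNorm_eq]; simpa [hx₀def] using he
  set T : E →L[ℝ] E := LinearMap.toContinuousLinearMap (Matrix.toEuclideanLin M) with hTdef
  have hsym : (T : E →ₗ[ℝ] E).IsSymmetric := by
    rw [hTdef, LinearMap.coe_toContinuousLinearMap]
    exact Matrix.isHermitian_iff_isSymmetric.mp
      (by rwa [Matrix.IsHermitian, conjTranspose_eq_transpose_of_trivial])
  have hsa : IsSelfAdjoint T := ContinuousLinearMap.isSelfAdjoint_iff_isSymmetric.mpr hsym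
  have hre : ∀ x : E, T.reApplyInnerSelf x =
      (WithLp.equiv 2 (Fin n → ℝ) x) ⬝ᵥ M.mulVec (WithLp.equiv 2 (Fin n → ℝ) x) := by
    intro x
    have hTx : ∀ i, T x i = M.mulVec (WithLp.equiv 2 (Fin n → ℝ) x) i := by
      intro i
      have h1 := Matrix.ofLp_toEuclideanLin_apply M x
      have h2 : T x = Matrix.toEuclideanLin M x := by rw [hTdef]; rfl
      rw [h2]
      exact congrFun h1 i
    rw [ContinuousLinearMap.reApplyInnerSelf]
    have h3 : (inner ℝ (T x) x : ℝ) = ∑ i, T x i * x i := by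
      rw [PiLp.inner_apply]; simp [mul_comm]
    rw [show (RCLike.re (inner ℝ (T x) x : ℝ)) = (inner ℝ (T x) x : ℝ) from rfl, h3]
    rw [dotProduct, Finset.sum_congr rfl fun i _ => by rw [hTx i]]
    exact Finset.sum_congr rfl fun i _ => mul_comm _ _
  have hextr : IsMinOn T.reApplyInnerSelf (Metric.sphere (0:E) ‖x₀‖) x₀ := by
    rw [hx0norm]
    intro x hx
    simp only [Metric.mem_sphere, dist_zero_right] at hx
    simp only [Set.mem_setOf_eq, hre]
    have hxe : euclNorm (WithLp.equiv 2 (Fin n → ℝ) x) = 1 := by rw [← euclNorm_eq]; exact hx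
    have h0 : WithLp.equiv 2 (Fin n → ℝ) x₀ = e := by simp [hx₀def]
    rw [h0]
    exact hmin _ hxe
  have key := hsa.eq_smul_self_of_isLocalExtrOn_real (Or.inl hextr.localize)
  have hray : T.rayleighQuotient x₀ = e ⬝ᵥ M.mulVec e := by
    rw [ContinuousLinearMap.rayleighQuotient, hre, hx0norm]
    simp [hx₀def]
  rw [hray] at key
  have h4 := congrArg (WithLp.equiv 2 (Fin n → ℝ)) key
  rw [show ∀ (c : ℝ) (y : E), WithLp.equiv 2 (Fin n → ℝ) (c • y) = c • WithLp.equiv 2 (Fin n → ℝ) y from fun _ _ => rfl] at h4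
  simp only [hx₀def, Equiv.apply_symm_apply] at h4
  rw [← h4]
  have h2 : T x₀ = Matrix.toEuclideanLin M x₀ := by rw [hTdef]; rfl
  rw [h2, hx₀def, WithLp.equiv_symm_apply, Matrix.toEuclideanLin_apply_piLp_toLp]
  simp

lemma quad_diff {n : ℕ} (h : ℝ) (A B : Matrix (Fin n) (Fin n) ℝ) (v : Fin n → ℝ) :
    v ⬝ᵥ (h⁻¹ • (A - B)).mulVec v = (v ⬝ᵥ A.mulVec v - v ⬝ᵥ B.mulVec v) / h := by
  rw [Matrix.smul_mulVec, dotProduct_smul, Matrix.sub_mulVec, dotProduct_sub]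
  rw [smul_eq_mul, div_eq_inv_mul]

set_option maxHeartbeats 1000000 in
theorem stmt0 (n : ℕ) (hn : 1 ≤ n) (C : ℝ → Matrix (Fin n) (Fin n) ℝ)
    (t₀ : ℝ) (C' : Matrix (Fin n) (Fin n) ℝ)
    (hsymm : ∀ t, (C t).IsSymm)
    (hderiv : ∀ i j, HasDerivAt (fun t => C t i j) (C' i j) t₀)
    (lam : ℝ → ℝ)
    (hlam : ∀ t, lam t =
      sInf {x | ∃ v : Fin n → ℝ, euclNorm v = 1 ∧ x = v ⬝ᵥ (C t).mulVec v})
    (τ : ℝ)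
    (hτ : τ = sInf {x | ∃ e : Fin n → ℝ, (C t₀).mulVec e = lam t₀ • e ∧
      euclNorm e = 1 ∧ x = e ⬝ᵥ C'.mulVec e}) :
    τ ≤ liminf (fun h : ℝ => (lam (t₀ + h) - lam t₀) / h) (nhdsWithin 0 (Set.Ioi 0)) := by
  set l := nhdsWithin (0:ℝ) (Set.Ioi 0) with hl
  set f : ℝ → ℝ := fun h => (lam (t₀ + h) - lam t₀) / h with hf
  -- minimizers at each time
  have hminex : ∀ t : ℝ, ∃ v : Fin n → ℝ, euclNorm v = 1 ∧
      IsLeast {x | ∃ v : Fin n → ℝ, euclNorm v = 1 ∧ x = v ⬝ᵥ (C t).mulVec v}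
        (v ⬝ᵥ (C t).mulVec v) := fun t => exists_min n hn (C t)
  choose v hv hleast using hminex
  have hlamv : ∀ t, lam t = (v t) ⬝ᵥ (C t).mulVec (v t) := fun t => by
    rw [hlam t]; exact (hleast t).csInf_eq
  have hlow : ∀ t (w : Fin n → ℝ), euclNorm w = 1 → lam t ≤ w ⬝ᵥ (C t).mulVec w := by
    intro t w hw
    rw [hlam t]
    exact csInf_le (hleast t).bddBelow ⟨w, hw, rfl⟩
  set D : ℝ → Matrix (Fin n) (Fin n) ℝ := fun h => h⁻¹ • (C (t₀ + h) - C t₀) with hDdef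
  -- the shifted map
  have hshift : Tendsto (fun h : ℝ => t₀ + h) l (𝓝 t₀) := by
    have : Tendsto (fun h : ℝ => t₀ + h) (𝓝 0) (𝓝 t₀) := by
      simpa using (continuous_add_left t₀).tendsto (0:ℝ)
    exact this.mono_left nhdsWithin_le_nhds
  have hshift' : Tendsto (fun h : ℝ => t₀ + h) l (nhdsWithin t₀ {t₀}ᶜ) := by
    refine tendsto_nhdsWithin_of_tendsto_nhds_of_eventually_within _ hshift ?_
    filter_upwards [self_mem_nhdsWithin] with h hh
    have : (0:ℝ) < h := hh
    simp only [Set.mem_compl_iff, Set.mem_singleton_iff]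
    linarith
  have hD : Tendsto D l (𝓝 C') := by
    refine tendsto_pi_nhds.mpr ?_
    intro i
    rw [tendsto_pi_nhds]
    intro j
    have hs := (hasDerivAt_iff_tendsto_slope.mp (hderiv i j)).comp hshift'
    have : (fun h : ℝ => D h i j) = fun h : ℝ => slope (fun t => C t i j) t₀ (t₀ + h) := by
      funext h
      simp [hDdef, slope_def_field, Matrix.smul_apply, Matrix.sub_apply, div_eq_inv_mul]
    rw [this]
    exact hs
  have hCc : Tendsto (fun h : ℝ => C (t₀ + h)) l (𝓝 (C t₀)) := by
    refine tendsto_pi_nhds.mpr ?_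
    intro i
    rw [tendsto_pi_nhds]
    intro j
    exact ((hderiv i j).continuousAt.tendsto).comp hshift
  have hQcont := quad_continuous n
  set e₀ : Fin n → ℝ := v t₀ with he₀
  -- upper bound for coboundedness
  have hfub : ∀ᶠ h in l, f h ≤ e₀ ⬝ᵥ (D h).mulVec e₀ := by
    filter_upwards [self_mem_nhdsWithin] with h hh
    have hh : (0:ℝ) < h := hh
    rw [hDdef]
    simp only
    rw [quad_diff]
    show (lam (t₀ + h) - lam t₀) / h ≤ _
    gcongr
    · exact hlow _ _ (hv t₀)
    · exact (hlamv t₀).ge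
  have htend0 : Tendsto (fun h => e₀ ⬝ᵥ (D h).mulVec e₀) l (𝓝 (e₀ ⬝ᵥ C'.mulVec e₀)) :=
    (hQcont.tendsto (C', e₀)).comp (hD.prodMk_nhds tendsto_const_nhds)
  have hbdd : IsBoundedUnder (· ≤ ·) l f := by
    refine ⟨e₀ ⬝ᵥ C'.mulVec e₀ + 1, ?_⟩
    rw [eventually_map]
    filter_upwards [hfub, htend0.eventually (eventually_le_nhds (lt_add_one _))] with h h1 h2
    exact h1.trans h2
  have hcob : IsCoboundedUnder (· ≥ ·) l f := hbdd.isCoboundedUnder_ge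
  have hmain : ∀ ε : ℝ, 0 < ε → ∀ᶠ h in l, τ - ε ≤ f h := by
    intro ε hε
    by_contra hcon
    rw [not_eventually] at hcon
    obtain ⟨s, hs_tend, hs⟩ := exists_seq_forall_of_frequently hcon
    set w : ℕ → (Fin n → ℝ) := fun k => v (t₀ + s k) with hwdef
    have hwmem : ∀ k, w k ∈ {u : Fin n → ℝ | euclNorm u = 1} := fun k => hv _
    obtain ⟨e, hemem, φ, hφ, hconv⟩ := (sphere_compact n).tendsto_subseq hwmem
    have he : euclNorm e = 1 := hemem
    set g : ℕ → ℝ := fun k => s (φ k) with hgdef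
    have hg_tend : Tendsto g atTop l := hs_tend.comp hφ.tendsto_atTop
    have hgpos : ∀ᶠ k in atTop, 0 < g k := hg_tend.eventually self_mem_nhdsWithin
    have hwconv : Tendsto (fun k => w (φ k)) atTop (𝓝 e) := hconv
    have hQ1 : Tendsto (fun k => (w (φ k)) ⬝ᵥ (C (t₀ + g k)).mulVec (w (φ k))) atTop
        (𝓝 (e ⬝ᵥ (C t₀).mulVec e)) :=
      (hQcont.tendsto (C t₀, e)).comp ((hCc.comp hg_tend).prodMk_nhds hwconv)
    have hQ2 : Tendsto (fun k => (w (φ k)) ⬝ᵥ (D (g k)).mulVec (w (φ k))) atTop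
        (𝓝 (e ⬝ᵥ C'.mulVec e)) :=
      (hQcont.tendsto (C', e)).comp ((hD.comp hg_tend).prodMk_nhds hwconv)
    have hQ3 : Tendsto (fun k => e₀ ⬝ᵥ (C (t₀ + g k)).mulVec e₀) atTop (𝓝 (lam t₀)) := by
      rw [hlamv t₀]
      exact (hQcont.tendsto (C t₀, e₀)).comp ((hCc.comp hg_tend).prodMk_nhds tendsto_const_nhds)
    have hlamtend : Tendsto (fun k => lam (t₀ + g k)) atTop (𝓝 (e ⬝ᵥ (C t₀).mulVec e)) := by
      have heqf : (fun k => lam (t₀ + g k)) =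
          fun k => (w (φ k)) ⬝ᵥ (C (t₀ + g k)).mulVec (w (φ k)) := by
        funext k; exact hlamv _
      rw [heqf]; exact hQ1
    have hle1 : e ⬝ᵥ (C t₀).mulVec e ≤ lam t₀ :=
      le_of_tendsto_of_tendsto' hlamtend hQ3 fun k => hlow _ _ (hv t₀)
    have heq : e ⬝ᵥ (C t₀).mulVec e = lam t₀ := le_antisymm hle1 (hlow t₀ e he)
    have heig : (C t₀).mulVec e = lam t₀ • e := by
      rw [← heq]
      exact rayleigh_min (C t₀) (hsymm t₀) e he fun u hu => heq.le.trans (hlow t₀ u hu)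
    have hbddE : BddBelow {x | ∃ e : Fin n → ℝ, (C t₀).mulVec e = lam t₀ • e ∧
        euclNorm e = 1 ∧ x = e ⬝ᵥ C'.mulVec e} := by
      obtain ⟨u, hu, hL⟩ := exists_min n hn C'
      exact hL.bddBelow.mono (by rintro x ⟨e', _, he1, rfl⟩; exact ⟨e', he1, rfl⟩)
    have hτle : τ ≤ e ⬝ᵥ C'.mulVec e := by
      rw [hτ]; exact csInf_le hbddE ⟨e, heig, he, rfl⟩
    have hub : ∀ᶠ k in atTop, (w (φ k)) ⬝ᵥ (D (g k)).mulVec (w (φ k)) ≤ f (g k) := by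
      filter_upwards [hgpos] with k hk
      rw [hDdef]
      simp only
      rw [quad_diff]
      show _ ≤ (lam (t₀ + g k) - lam t₀) / g k
      gcongr
      · exact (hlamv _).ge
      · exact hlow _ _ (hv _)
    have hfin : e ⬝ᵥ C'.mulVec e ≤ τ - ε := by
      apply le_of_tendsto hQ2
      filter_upwards [hub] with k hk
      exact hk.trans (le_of_lt (not_le.mp (hs (φ k))))
    linarith
  refine le_of_forall_pos_le_add fun ε hε => ?_
  have h1 := le_liminf_of_le hcob (hmain ε hε)
  linarith
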